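/- In a Barr exact category C, let d = (d_⊤, d_⊥), c = (c_⊤, c_⊥) : f_R ⇉ f_E be a parallel pair of double extensions between regular epimorphisms f_R : R_⊤ → R_⊥ and f_E : E_⊤ → E_⊥, such that the pair (d_⊤, c_⊤) : R_⊤ ⇉ E_⊤ is the kernel pair of some morphism of C and the pair (d_⊥, c_⊥) : R_⊥ ⇉ E_⊥ is the kernel pair of some morphism of C. Then the coequalizer of d and c exists in Ext(C), it is a double extension, and it is computed componentwise: its two components are the coequalizers in C of (d_⊤, c_⊤) and of (d_⊥, c_⊥). -/

import Mathlib

open CategoryTheory CategoryTheory.Limits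

universe v u

namespace Paper

variable {C : Type u} [Category.{v} C]

/-- `f` is a regular epimorphism. -/
def IsRegEpi {X Y : C} (f : X ⟶ Y) : Prop := Nonempty (RegularEpi f)

/-- A regular category: a finitely complete category with coequalizers of kernel pairs in
which regular epimorphisms are stable under pullback. -/
class RegularCat (C : Type u) [Category.{v} C] [HasFiniteLimits C] : Prop where
  hasCoeqOfKernelPairs : ∀ {X Y : C} (f : X ⟶ Y),
    HasCoequalizer (pullback.fst f f) (pullback.snd f f)
  regEpiPullbackStable : ∀ {X Y Z : C} (f : X ⟶ Y) (g : Z ⟶ Y),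
    IsRegEpi f → IsRegEpi (pullback.snd f g)

/-- An internal equivalence relation given by a parallel pair `r₁ r₂ : R ⟶ X`. -/
structure IsEquivRel [HasFiniteLimits C] {R X : C} (r₁ r₂ : R ⟶ X) : Prop where
  jointlyMono : Mono (prod.lift r₁ r₂)
  refl : ∃ d : X ⟶ R, d ≫ r₁ = 𝟙 X ∧ d ≫ r₂ = 𝟙 X
  symm : ∃ s : R ⟶ R, s ≫ r₁ = r₂ ∧ s ≫ r₂ = r₁
  trans : ∃ t : pullback r₂ r₁ ⟶ R,
    t ≫ r₁ = pullback.fst r₂ r₁ ≫ r₁ ∧ t ≫ r₂ = pullback.snd r₂ r₁ ≫ r₂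

/-- A Barr exact category: a regular category in which every internal equivalence relation
is effective (i.e. is a kernel pair). -/
class BarrExact (C : Type u) [Category.{v} C] [HasFiniteLimits C] extends RegularCat C : Prop where
  equivRelEffective : ∀ {R X : C} (r₁ r₂ : R ⟶ X), IsEquivRel r₁ r₂ →
    ∃ (Y : C) (f : X ⟶ Y), IsKernelPair f r₁ r₂

section DoubleExt
variable [HasFiniteLimits C]

/-- A double extension: a commutative square `αt ≫ fB = fA ≫ αb` of regular epimorphisms
whose comparison morphism to the pullback is also a regular epimorphism. -/
structure IsDoubleExt {A₁ A₀ B₁ B₀ : C} (fA : A₁ ⟶ A₀) (fB : B₁ ⟶ B₀)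
    (αt : A₁ ⟶ B₁) (αb : A₀ ⟶ B₀) : Prop where
  w : αt ≫ fB = fA ≫ αb
  left : IsRegEpi fA
  right : IsRegEpi fB
  top : IsRegEpi αt
  bot : IsRegEpi αb
  comparison : IsRegEpi (pullback.lift fA αt w.symm : A₁ ⟶ pullback αb fB)

end DoubleExt

/-- The category `Ext C` of extensions: the full subcategory of the arrow category of `C`
determined by the regular epimorphisms. -/
abbrev ExtCat (C : Type u) [Category.{v} C] : Type max u v :=
  ObjectProperty.FullSubcategory (fun f : Arrow C => IsRegEpi f.hom)

/-- An object of `Ext C` from a regular epimorphism. -/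
def ExtCat.mk' {X Y : C} (f : X ⟶ Y) (hf : IsRegEpi f) : ExtCat C :=
  ⟨Arrow.mk f, hf⟩

/-- The top (domain) component of a morphism of `Ext C`. -/
def ExtCat.homLeft {f g : ExtCat C} (φ : f ⟶ g) : f.obj.left ⟶ g.obj.left :=
  CommaMorphism.left φ.hom

/-- The bottom (codomain) component of a morphism of `Ext C`. -/
def ExtCat.homRight {f g : ExtCat C} (φ : f ⟶ g) : f.obj.right ⟶ g.obj.right :=
  CommaMorphism.right φ.hom

lemma ExtCat.homLeft_comp {f g h : ExtCat C} (a : f ⟶ g) (b : g ⟶ h) :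
    ExtCat.homLeft (a ≫ b) = ExtCat.homLeft a ≫ ExtCat.homLeft b := rfl

lemma ExtCat.homRight_comp {f g h : ExtCat C} (a : f ⟶ g) (b : g ⟶ h) :
    ExtCat.homRight (a ≫ b) = ExtCat.homRight a ≫ ExtCat.homRight b := rfl

lemma ExtCat.hom_w {f g : ExtCat C} (φ : f ⟶ g) :
    ExtCat.homLeft φ ≫ g.obj.hom = f.obj.hom ≫ ExtCat.homRight φ :=
  CommaMorphism.w φ.hom

/-- A morphism of `Ext C` from a commutative square in `C`. -/
def ExtCat.homMk' {X₁ X₀ Y₁ Y₀ : C} {f : X₁ ⟶ X₀} {g : Y₁ ⟶ Y₀}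
    {hf : IsRegEpi f} {hg : IsRegEpi g}
    (u : X₁ ⟶ Y₁) (v : X₀ ⟶ Y₀) (w : u ≫ g = f ≫ v) :
    ExtCat.mk' f hf ⟶ ExtCat.mk' g hg :=
  ObjectProperty.homMk (Arrow.homMk (u := u) (v := v) w)

/-- A (commutative) square in `C`, with left vertical `left : A₁ ⟶ A₀`, right vertical
`right : B₁ ⟶ B₀`, top horizontal `top : A₁ ⟶ B₁` and bottom horizontal `bot : A₀ ⟶ B₀`. -/
structure Sq (C : Type u) [Category.{v} C] where
  A₁ : C
  A₀ : C
  B₁ : C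
  B₀ : C
  left : A₁ ⟶ A₀
  right : B₁ ⟶ B₀
  top : A₁ ⟶ B₁
  bot : A₀ ⟶ B₀
  w : top ≫ right = left ≫ bot

/-- The square is a double extension. -/
def Sq.IsDE [HasFiniteLimits C] (s : Sq C) : Prop :=
  IsDoubleExt s.left s.right s.top s.bot

/-- A commutative cube, presented as a morphism of squares `Φ : s ⟶ t`. -/
structure SqHom (s t : Sq C) where
  h₁₁ : s.A₁ ⟶ t.A₁
  h₁₀ : s.A₀ ⟶ t.A₀
  h₀₁ : s.B₁ ⟶ t.B₁
  h₀₀ : s.B₀ ⟶ t.B₀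
  wA : h₁₁ ≫ t.left = s.left ≫ h₁₀
  wB : h₀₁ ≫ t.right = s.right ≫ h₀₀
  wt : h₁₁ ≫ t.top = s.top ≫ h₀₁
  wb : h₁₀ ≫ t.bot = s.bot ≫ h₀₀

/-- Composition of cubes (as morphisms of squares). -/
def SqHom.comp {s t u : Sq C} (Φ : SqHom s t) (Ψ : SqHom t u) : SqHom s u where
  h₁₁ := Φ.h₁₁ ≫ Ψ.h₁₁
  h₁₀ := Φ.h₁₀ ≫ Ψ.h₁₀
  h₀₁ := Φ.h₀₁ ≫ Ψ.h₀₁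
  h₀₀ := Φ.h₀₀ ≫ Ψ.h₀₀
  wA := by rw [Category.assoc, Ψ.wA, ← Category.assoc, Φ.wA, Category.assoc]
  wB := by rw [Category.assoc, Ψ.wB, ← Category.assoc, Φ.wB, Category.assoc]
  wt := by rw [Category.assoc, Ψ.wt, ← Category.assoc, Φ.wt, Category.assoc]
  wb := by rw [Category.assoc, Ψ.wb, ← Category.assoc, Φ.wb, Category.assoc]

section Cube
variable [HasFiniteLimits C]

/-- Seen as a morphism `(σ, β) : s ⟶ t` between the double extensions `s` (as the arrow
`s.left → s.right`) and `t`, the face `σ` of the cube: the square from `s.left` to `t.left`. -/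
def SqHom.sigmaSq {s t : Sq C} (Φ : SqHom s t) : Sq C where
  A₁ := s.A₁
  A₀ := s.A₀
  B₁ := t.A₁
  B₀ := t.A₀
  left := s.left
  right := t.left
  top := Φ.h₁₁
  bot := Φ.h₁₀
  w := Φ.wA

/-- The face `β` of the cube: the square from `s.right` to `t.right`. -/
def SqHom.betaSq {s t : Sq C} (Φ : SqHom s t) : Sq C where
  A₁ := s.B₁
  A₀ := s.B₀
  B₁ := t.B₁
  B₀ := t.B₀
  left := s.right
  right := t.right
  top := Φ.h₀₁
  bot := Φ.h₀₀
  w := Φ.wB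

/-- Top component of the componentwise pullback of `t` (i.e. `α`) and `betaSq Φ` (i.e. `β`). -/
noncomputable def SqHom.P₁ {s t : Sq C} (Φ : SqHom s t) : C := pullback t.top Φ.h₀₁

/-- Bottom component of the componentwise pullback of `α` and `β`. -/
noncomputable def SqHom.P₀ {s t : Sq C} (Φ : SqHom s t) : C := pullback t.bot Φ.h₀₀

/-- The induced arrow between the components of the componentwise pullback of `α` and `β`. -/
noncomputable def SqHom.fP {s t : Sq C} (Φ : SqHom s t) : Φ.P₁ ⟶ Φ.P₀ :=
  pullback.map t.top Φ.h₀₁ t.bot Φ.h₀₀ t.left s.right t.right t.w Φ.wB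

/-- The top comparison morphism. -/
noncomputable def SqHom.c₁ {s t : Sq C} (Φ : SqHom s t) : s.A₁ ⟶ Φ.P₁ :=
  pullback.lift Φ.h₁₁ s.top Φ.wt

/-- The bottom comparison morphism. -/
noncomputable def SqHom.c₀ {s t : Sq C} (Φ : SqHom s t) : s.A₀ ⟶ Φ.P₀ :=
  pullback.lift Φ.h₁₀ s.bot Φ.wb

lemma SqHom.comp_w {s t : Sq C} (Φ : SqHom s t) : Φ.c₁ ≫ Φ.fP = s.left ≫ Φ.c₀ := by
  apply pullback.hom_ext
  · simp only [SqHom.c₁, SqHom.c₀, SqHom.fP, SqHom.P₁, SqHom.P₀, Category.assoc,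
      pullback.lift_fst, pullback.lift_fst_assoc, Φ.wA]
  · simp only [SqHom.c₁, SqHom.c₀, SqHom.fP, SqHom.P₁, SqHom.P₀, Category.assoc,
      pullback.lift_snd, pullback.lift_snd_assoc, s.w]

/-- The comparison square of the cube `Φ`, from `s.left` to the componentwise pullback
of `α` and `β`. -/
noncomputable def SqHom.compSq {s t : Sq C} (Φ : SqHom s t) : Sq C where
  A₁ := s.A₁
  A₀ := s.A₀
  B₁ := Φ.P₁
  B₀ := Φ.P₀
  left := s.left
  right := Φ.fP
  top := Φ.c₁
  bot := Φ.c₀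
  w := Φ.comp_w

/-- A `3`-cubical extension: the two opposite faces `γ = s` and `α = t`, the two connecting
faces `σ` and `β`, and the comparison square to the componentwise pullback of `α` and `β`
are all double extensions. -/
def SqHom.Is3CubExt {s t : Sq C} (Φ : SqHom s t) : Prop :=
  s.IsDE ∧ t.IsDE ∧ Φ.sigmaSq.IsDE ∧ Φ.betaSq.IsDE ∧ Φ.compSq.IsDE

end Cube

/-- The cube `Φ : s ⟶ t` is a limit cube: the cone from the initial vertex `s.A₁` on the
diagram formed by the remaining seven vertices is a limit cone. -/
def SqHom.IsLimitCube {s t : Sq C} (Φ : SqHom s t) : Prop :=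
  ∀ (W : C) (wA₀ : W ⟶ s.A₀) (wB₁ : W ⟶ s.B₁) (wtA₁ : W ⟶ t.A₁),
    wA₀ ≫ s.bot = wB₁ ≫ s.right →
    wA₀ ≫ Φ.h₁₀ = wtA₁ ≫ t.left →
    wB₁ ≫ Φ.h₀₁ = wtA₁ ≫ t.top →
    ∃! u : W ⟶ s.A₁, u ≫ s.left = wA₀ ∧ u ≫ s.top = wB₁ ∧ u ≫ Φ.h₁₁ = wtA₁

/-- A discrete fibration (of order 3): a `3`-cubical extension which is a limit cube. -/
def SqHom.IsDiscFib [HasFiniteLimits C] {s t : Sq C} (Φ : SqHom s t) : Prop :=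
  Φ.Is3CubExt ∧ Φ.IsLimitCube
section Galois
variable [HasFiniteLimits C]

/-- A strongly E-Birkhoff Galois structure on `C`: a full replete reflective subcategory
(given by the predicate `inB`, the reflector `F` and the unit `η`) such that every unit
component is a regular epimorphism and every naturality square of the unit at a regular
epimorphism is a double extension. -/
structure BirkhoffStructure (C : Type u) [Category.{v} C] [HasFiniteLimits C] where
  inB : C → Prop
  replete : ∀ {X Y : C}, inB X → (X ≅ Y) → inB Y
  F : C ⥤ C
  η : 𝟭 C ⟶ F
  obj_inB : ∀ A : C, inB (F.obj A)
  unit_regEpi : ∀ A : C, IsRegEpi (η.app A)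
  univ : ∀ {A X : C}, inB X → ∀ g : A ⟶ X, ∃! h : F.obj A ⟶ X, η.app A ≫ h = g
  stronglyBirkhoff : ∀ {A B : C} (f : A ⟶ B), IsRegEpi f →
    IsDoubleExt f (F.map f) (η.app A) (η.app B)

/-- A trivial covering: a regular epimorphism whose unit naturality square is a pullback. -/
def TrivialCovering (G : BirkhoffStructure C) {T E : C} (t : T ⟶ E) : Prop :=
  IsRegEpi t ∧ IsPullback (G.η.app T) t (G.F.map t) (G.η.app E)

/-- A covering: a regular epimorphism whose pullback along some regular epimorphism is a
trivial covering. -/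
def Covering (G : BirkhoffStructure C) {A B : C} (c : A ⟶ B) : Prop :=
  IsRegEpi c ∧ ∃ (E : C) (e : E ⟶ B), IsRegEpi e ∧ TrivialCovering G (pullback.snd c e)

end Galois

/-- The underlying square in `C` of a morphism of `Ext C`. -/
def sqOfHom {f g : ExtCat C} (φ : f ⟶ g) : Sq C where
  A₁ := f.obj.left
  A₀ := f.obj.right
  B₁ := g.obj.left
  B₀ := g.obj.right
  left := f.obj.hom
  right := g.obj.hom
  top := ExtCat.homLeft φ
  bot := ExtCat.homRight φ
  w := ExtCat.hom_w φ

/-- The underlying cube in `C` of a naturality square in `Ext C` of a natural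
transformation `η₁ : 𝟭 (Ext C) ⟶ F₁` at a morphism `φ : f ⟶ g` of `Ext C`. -/
def natCube (F₁ : ExtCat C ⥤ ExtCat C) (η₁ : 𝟭 (ExtCat C) ⟶ F₁) {f g : ExtCat C}
    (φ : f ⟶ g) : SqHom (sqOfHom φ) (sqOfHom (F₁.map φ)) where
  h₁₁ := ExtCat.homLeft (η₁.app f)
  h₁₀ := ExtCat.homRight (η₁.app f)
  h₀₁ := ExtCat.homLeft (η₁.app g)
  h₀₀ := ExtCat.homRight (η₁.app g)
  wA := ExtCat.hom_w (η₁.app f)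
  wB := ExtCat.hom_w (η₁.app g)
  wt := by
    have h := congrArg ExtCat.homLeft (η₁.naturality φ)
    rw [ExtCat.homLeft_comp, ExtCat.homLeft_comp] at h
    exact h.symm
  wb := by
    have h := congrArg ExtCat.homRight (η₁.naturality φ)
    rw [ExtCat.homRight_comp, ExtCat.homRight_comp] at h
    exact h.symm

section LevelOne
variable [HasFiniteLimits C]

/-- The level-one Galois structure induced by a strongly E-Birkhoff Galois structure `G`:
the coverings form a reflective subcategory of `Ext C`, with reflector `F₁` and unit `η₁`,
every unit component is a double extension, and the reflection is strongly E₂-Birkhoff. -/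
structure LevelOne (G : BirkhoffStructure C) where
  F₁ : ExtCat C ⥤ ExtCat C
  η₁ : 𝟭 (ExtCat C) ⟶ F₁
  obj_cov : ∀ f : ExtCat C, Covering G (F₁.obj f).obj.hom
  univ : ∀ {f x : ExtCat C}, Covering G x.obj.hom → ∀ g : f ⟶ x,
    ∃! h : F₁.obj f ⟶ x, η₁.app f ≫ h = g
  unit_DE : ∀ f : ExtCat C, (sqOfHom (η₁.app f)).IsDE
  stronglyBirkhoff : ∀ {f g : ExtCat C} (φ : f ⟶ g), (sqOfHom φ).IsDE →
    (natCube F₁ η₁ φ).Is3CubExt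

/-- A trivial double covering: a morphism of `Ext C` whose underlying square is a double
extension and whose `η₁`-naturality square is a pullback in `Ext C`. -/
def TrivDoubleCov {G : BirkhoffStructure C} (L : LevelOne G) {f g : ExtCat C}
    (φ : f ⟶ g) : Prop :=
  (sqOfHom φ).IsDE ∧ IsPullback (L.η₁.app f) φ (L.F₁.map φ) (L.η₁.app g)

/-- A double covering: a double extension `α : d ⟶ c` in `Ext C` such that the pullback of
`α` along some double extension `γ : e ⟶ c` is a trivial double covering. -/
def DoubleCov {G : BirkhoffStructure C} (L : LevelOne G) {d c : ExtCat C}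
    (α : d ⟶ c) : Prop :=
  (sqOfHom α).IsDE ∧ ∃ (e : ExtCat C) (γ : e ⟶ c), (sqOfHom γ).IsDE ∧
    ∃ (p : ExtCat C) (pγ : p ⟶ e) (pα : p ⟶ d),
      IsPullback pγ pα γ α ∧ TrivDoubleCov L pγ

end LevelOne

section AuxRegular
variable [HasFiniteLimits C]

omit [HasFiniteLimits C] in
lemma IsRegEpi.epi {X Y : C} {f : X ⟶ Y} (h : IsRegEpi f) : Epi f := by
  obtain ⟨h⟩ := h; exact h.epi

omit [HasFiniteLimits C] in
lemma IsRegEpi.strongEpi {X Y : C} {f : X ⟶ Y} (h : IsRegEpi f) : StrongEpi f := by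
  obtain ⟨h⟩ := h; haveI := isRegularEpi_of_regularEpi h; infer_instance

variable [RegularCat C]

lemma isRegEpi_of_strongEpi {X Y : C} (g : X ⟶ Y) (hs : StrongEpi g) : IsRegEpi g := by
  haveI := RegularCat.hasCoeqOfKernelPairs (C := C) g
  set a := pullback.fst g g with ha
  set b := pullback.snd g g with hb
  set c : X ⟶ coequalizer a b := coequalizer.π a b with hc
  set m : coequalizer a b ⟶ Y := coequalizer.desc g pullback.condition with hmdef
  have hcm : c ≫ m = g := coequalizer.π_desc _ _
  have hce : IsRegEpi c := ⟨coequalizerRegular a b⟩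
  have hm : Mono m := by
    constructor
    intro T u v huv
    have he₁ : IsRegEpi (pullback.snd c u) := RegularCat.regEpiPullbackStable c u hce
    set e₁ := pullback.snd c u with he₁'
    set u' := pullback.fst c u with hu''
    have he₂ : IsRegEpi (pullback.snd c (e₁ ≫ v)) :=
      RegularCat.regEpiPullbackStable _ _ hce
    set e₂ := pullback.snd c (e₁ ≫ v) with he₂'
    set v' := pullback.fst c (e₁ ≫ v) with hv''
    have hu' : u' ≫ c = e₁ ≫ u := pullback.condition
    have hv' : v' ≫ c = e₂ ≫ (e₁ ≫ v) := pullback.condition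
    have hg : (e₂ ≫ u') ≫ g = v' ≫ g := by
      have h3 : (e₂ ≫ u') ≫ c ≫ m = v' ≫ c ≫ m :=
        calc (e₂ ≫ u') ≫ c ≫ m = e₂ ≫ (u' ≫ c) ≫ m := by
              simp only [Category.assoc]
          _ = e₂ ≫ e₁ ≫ u ≫ m := by rw [hu']; simp only [Category.assoc]
          _ = e₂ ≫ e₁ ≫ v ≫ m := by rw [huv]
          _ = (v' ≫ c) ≫ m := by rw [hv']; simp only [Category.assoc]
          _ = v' ≫ c ≫ m := by simp only [Category.assoc]
      rw [hcm] at h3; exact h3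
    set w : _ ⟶ pullback g g := pullback.lift (e₂ ≫ u') v' hg with hw
    have hwa : w ≫ a = e₂ ≫ u' := pullback.lift_fst _ _ _
    have hwb : w ≫ b = v' := pullback.lift_snd _ _ _
    have hcc : a ≫ c = b ≫ c := coequalizer.condition a b
    have key : e₂ ≫ e₁ ≫ u = e₂ ≫ e₁ ≫ v := by
      calc e₂ ≫ e₁ ≫ u = (e₂ ≫ u') ≫ c := by rw [← hu']; simp only [Category.assoc]
        _ = w ≫ a ≫ c := by rw [← hwa]; simp only [Category.assoc]
        _ = w ≫ b ≫ c := by rw [hcc]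
        _ = v' ≫ c := by rw [← Category.assoc, hwb]
        _ = e₂ ≫ e₁ ≫ v := by rw [hv']
    haveI := he₁.epi
    haveI := he₂.epi
    exact (cancel_epi e₁).1 ((cancel_epi e₂).1 key)
  haveI := hm
  haveI := hs
  have sq : CommSq c g m (𝟙 Y) := ⟨by rw [hcm, Category.comp_id]⟩
  have hlm : sq.lift ≫ m = 𝟙 Y := sq.fac_right
  have hgl : g ≫ sq.lift = c := sq.fac_left
  haveI : IsIso m := by
    refine ⟨sq.lift, ?_, hlm⟩
    have : (m ≫ sq.lift) ≫ m = 𝟙 _ ≫ m := by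
      rw [Category.assoc, hlm, Category.comp_id, Category.id_comp]
    exact (cancel_mono m).1 this
  haveI : Epi g := hs.epi
  refine ⟨⟨pullback g g, a, b, pullback.condition, ?_⟩⟩
  refine Cofork.IsColimit.mk' _ fun s => ⟨inv m ≫ coequalizer.desc s.π s.condition, ?_, ?_⟩
  · have h2 : (c ≫ m) ≫ inv m ≫ coequalizer.desc s.π s.condition = s.π := by
      rw [Category.assoc, IsIso.hom_inv_id_assoc, coequalizer.π_desc]
    rw [hcm] at h2
    simpa using h2
  · intro m' hm'
    have h2 : (c ≫ m) ≫ inv m ≫ coequalizer.desc s.π s.condition = s.π := by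
      rw [Category.assoc, IsIso.hom_inv_id_assoc, coequalizer.π_desc]
    rw [hcm] at h2
    apply (cancel_epi g).1
    simpa using hm'.trans h2.symm

lemma IsRegEpi.comp {X Y Z : C} {f : X ⟶ Y} {g : Y ⟶ Z} (hf : IsRegEpi f) (hg : IsRegEpi g) :
    IsRegEpi (f ≫ g) := by
  haveI := hf.strongEpi; haveI := hg.strongEpi
  exact isRegEpi_of_strongEpi _ (strongEpi_comp f g)

lemma IsRegEpi.of_comp {X Y Z : C} (f : X ⟶ Y) {g : Y ⟶ Z} (h : IsRegEpi (f ≫ g)) :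
    IsRegEpi g := by
  haveI := h.strongEpi
  exact isRegEpi_of_strongEpi _ (strongEpi_of_strongEpi f g)

omit [RegularCat C] in
omit [HasFiniteLimits C] in
lemma isKernelPair_of_coequalizer {R X Y Q : C} {a b : R ⟶ X} {q : X ⟶ Y}
    (hk : IsKernelPair q a b) {π : X ⟶ Q} (hab : a ≫ π = b ≫ π)
    (hco : IsColimit (Cofork.ofπ π hab)) : IsKernelPair π a b := by
  obtain ⟨m, hm⟩ := Cofork.IsColimit.desc' hco q hk.w
  rw [Cofork.π_ofπ] at hm
  refine IsPullback.of_isLimit (c := PullbackCone.mk a b hab) ?_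
  refine PullbackCone.IsLimit.mk hab
    (fun s => hk.lift s.fst s.snd ?_) (fun s => hk.lift_fst _ _ _)
    (fun s => hk.lift_snd _ _ _) (fun s t h1 h2 => ?_)
  · rw [← hm, ← Category.assoc, ← Category.assoc, s.condition]
  · exact hk.hom_ext (by rw [h1, hk.lift_fst]) (by rw [h2, hk.lift_snd])

lemma coequalizer_of_kernelPair {R X Y : C} {a b : R ⟶ X} {q : X ⟶ Y}
    (hk : IsKernelPair q a b) :
    ∃ (Q : C) (π : X ⟶ Q) (hab : a ≫ π = b ≫ π),
      Nonempty (IsColimit (Cofork.ofπ π hab)) ∧ IsRegEpi π := by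
  haveI := RegularCat.hasCoeqOfKernelPairs (C := C) q
  set π : X ⟶ coequalizer (pullback.fst q q) (pullback.snd q q) :=
    coequalizer.π (pullback.fst q q) (pullback.snd q q) with hπ
  have h1 : hk.isoPullback.hom ≫ pullback.fst q q = a := hk.isoPullback_hom_fst
  have h2 : hk.isoPullback.hom ≫ pullback.snd q q = b := hk.isoPullback_hom_snd
  have hab : a ≫ π = b ≫ π := by
    have key : (hk.isoPullback.hom ≫ pullback.fst q q) ≫ π
        = (hk.isoPullback.hom ≫ pullback.snd q q) ≫ π := by
      rw [Category.assoc, Category.assoc, coequalizer.condition]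
    rw [h1, h2] at key
    exact key
  refine ⟨_, π, hab, ⟨?_⟩, ⟨coequalizerRegular _ _⟩⟩
  refine Cofork.IsColimit.mk' _ fun s => ?_
  have hcond : pullback.fst q q ≫ s.π = pullback.snd q q ≫ s.π := by
    apply (cancel_epi hk.isoPullback.hom).1
    rw [← Category.assoc, ← Category.assoc, h1, h2]
    exact s.condition
  refine ⟨coequalizer.desc s.π hcond, coequalizer.π_desc s.π hcond,
    fun hm' => ?_⟩
  haveI : Epi π := inferInstance
  apply (cancel_epi π).1
  rw [coequalizer.π_desc]
  simpa using hm'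

end AuxRegular

/-- In a Barr exact category, a parallel pair of double extensions which is a
componentwise kernel pair admits a coequalizer in `Ext C`, which is a double extension and
is computed componentwise. -/
theorem statement_4 {C : Type u} [Category.{v} C] [HasFiniteLimits C] [BarrExact C]
    {R₁ R₀ E₁ E₀ : C}
    (fR : R₁ ⟶ R₀) (fE : E₁ ⟶ E₀)
    (dt : R₁ ⟶ E₁) (db : R₀ ⟶ E₀) (ct : R₁ ⟶ E₁) (cb : R₀ ⟶ E₀)
    (hd : IsDoubleExt fR fE dt db) (hc : IsDoubleExt fR fE ct cb)
    (htop : ∃ (Y : C) (q : E₁ ⟶ Y), IsKernelPair q dt ct)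
    (hbot : ∃ (Y : C) (q : E₀ ⟶ Y), IsKernelPair q db cb) :
    ∃ (Q₁ Q₀ : C) (q₁ : E₁ ⟶ Q₁) (q₀ : E₀ ⟶ Q₀) (fQ : Q₁ ⟶ Q₀)
      (hq : IsDoubleExt fE fQ q₁ q₀)
      (eq : (ExtCat.homMk' (hf := hd.left) (hg := hd.right) dt db hd.w) ≫
              ExtCat.homMk' (hf := hd.right) (hg := hq.right) q₁ q₀ hq.w
          = (ExtCat.homMk' (hf := hd.left) (hg := hd.right) ct cb hc.w) ≫
              ExtCat.homMk' q₁ q₀ hq.w)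
      (eq₁ : dt ≫ q₁ = ct ≫ q₁) (eq₀ : db ≫ q₀ = cb ≫ q₀),
      -- the coequalizer of `d` and `c` in `Ext C` is `(q₁, q₀) : f_E ⟶ f_Q` ...
      Nonempty (IsColimit (Cofork.ofπ (ExtCat.homMk' (hf := hd.right) (hg := hq.right)
        q₁ q₀ hq.w) eq)) ∧
      -- ... and it is computed componentwise:
      Nonempty (IsColimit (Cofork.ofπ q₁ eq₁)) ∧
      Nonempty (IsColimit (Cofork.ofπ q₀ eq₀)) := by
  classical
  obtain ⟨Y₁, qt, hkt⟩ := htop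
  obtain ⟨Y₀, qb, hkb⟩ := hbot
  obtain ⟨Q₁, q₁, eq₁, ⟨hco₁⟩, hre₁⟩ := coequalizer_of_kernelPair hkt
  obtain ⟨Q₀, q₀, eq₀, ⟨hco₀⟩, hre₀⟩ := coequalizer_of_kernelPair hkb
  haveI epiq₁ : Epi q₁ := hre₁.epi
  haveI epiq₀ : Epi q₀ := hre₀.epi
  have cond : dt ≫ fE ≫ q₀ = ct ≫ fE ≫ q₀ := by
    rw [← Category.assoc, hd.w, Category.assoc, eq₀, ← Category.assoc, ← hc.w,
      Category.assoc]
  obtain ⟨fQ, hfQ⟩ := Cofork.IsColimit.desc' hco₁ (fE ≫ q₀) cond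
  rw [Cofork.π_ofπ] at hfQ
  have w : q₁ ≫ fQ = fE ≫ q₀ := hfQ
  have kp₁ : IsKernelPair q₁ dt ct := isKernelPair_of_coequalizer hkt eq₁ hco₁
  have kp₀ : IsKernelPair q₀ db cb := isKernelPair_of_coequalizer hkb eq₀ hco₀
  have hfQre : IsRegEpi fQ := IsRegEpi.of_comp q₁ (by rw [w]; exact hd.right.comp hre₀)
  have hkcomp : IsRegEpi (pullback.lift fE q₁ w.symm : E₁ ⟶ pullback q₀ fQ) := by
    set k : E₁ ⟶ pullback q₀ fQ := pullback.lift fE q₁ w.symm with hkdef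
    have hk1 : k ≫ pullback.fst q₀ fQ = fE := pullback.lift_fst _ _ _
    have hk2 : k ≫ pullback.snd q₀ fQ = q₁ := pullback.lift_snd _ _ _
    have hp₁ : IsRegEpi (pullback.snd q₁ (pullback.snd q₀ fQ)) :=
      RegularCat.regEpiPullbackStable _ _ hre₁
    set p₁ := pullback.snd q₁ (pullback.snd q₀ fQ) with hp₁def
    set a := pullback.fst q₁ (pullback.snd q₀ fQ) with hadef
    have hW₁ : a ≫ q₁ = p₁ ≫ pullback.snd q₀ fQ := pullback.condition
    have hxy : (p₁ ≫ pullback.fst q₀ fQ) ≫ q₀ = (a ≫ fE) ≫ q₀ := by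
      calc (p₁ ≫ pullback.fst q₀ fQ) ≫ q₀ = p₁ ≫ pullback.snd q₀ fQ ≫ fQ := by
            rw [Category.assoc, pullback.condition]
        _ = (a ≫ q₁) ≫ fQ := by rw [hW₁, Category.assoc]
        _ = a ≫ fE ≫ q₀ := by rw [Category.assoc, w]
        _ = (a ≫ fE) ≫ q₀ := by rw [Category.assoc]
    set h := kp₀.lift (p₁ ≫ pullback.fst q₀ fQ) (a ≫ fE) hxy with hhdef
    have hh1 : h ≫ db = p₁ ≫ pullback.fst q₀ fQ := kp₀.lift_fst _ _ _
    have hh2 : h ≫ cb = a ≫ fE := kp₀.lift_snd _ _ _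
    set l : _ ⟶ pullback cb fE := pullback.lift h a hh2 with hldef
    have hl1 : l ≫ pullback.fst cb fE = h := pullback.lift_fst _ _ _
    have hl2 : l ≫ pullback.snd cb fE = a := pullback.lift_snd _ _ _
    have hrc : IsRegEpi (pullback.lift fR ct hc.w.symm : R₁ ⟶ pullback cb fE) :=
      hc.comparison
    set rc : R₁ ⟶ pullback cb fE := pullback.lift fR ct hc.w.symm with hrcdef
    have hrc1 : rc ≫ pullback.fst cb fE = fR := pullback.lift_fst _ _ _
    have hrc2 : rc ≫ pullback.snd cb fE = ct := pullback.lift_snd _ _ _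
    have hp₂ : IsRegEpi (pullback.snd rc l) := RegularCat.regEpiPullbackStable _ _ hrc
    set p₂ := pullback.snd rc l with hp₂def
    set b' := pullback.fst rc l with hb'def
    have hW₂ : b' ≫ rc = p₂ ≫ l := pullback.condition
    have hbf : b' ≫ fR = p₂ ≫ h := by
      have h4 := hW₂ =≫ pullback.fst cb fE
      rw [Category.assoc, Category.assoc, hrc1, hl1] at h4
      exact h4
    have hbc : b' ≫ ct = p₂ ≫ a := by
      have h4 := hW₂ =≫ pullback.snd cb fE
      rw [Category.assoc, Category.assoc, hrc2, hl2] at h4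
      exact h4
    have key : p₂ ≫ p₁ = (b' ≫ dt) ≫ k := by
      apply pullback.hom_ext
      · calc (p₂ ≫ p₁) ≫ pullback.fst q₀ fQ = p₂ ≫ (h ≫ db) := by
              rw [hh1, Category.assoc]
          _ = (p₂ ≫ h) ≫ db := by rw [Category.assoc]
          _ = (b' ≫ fR) ≫ db := by rw [hbf]
          _ = b' ≫ dt ≫ fE := by rw [Category.assoc, ← hd.w]
          _ = (b' ≫ dt) ≫ (k ≫ pullback.fst q₀ fQ) := by rw [hk1]; simp only [Category.assoc]
          _ = ((b' ≫ dt) ≫ k) ≫ pullback.fst q₀ fQ := by simp only [Category.assoc]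
      · calc (p₂ ≫ p₁) ≫ pullback.snd q₀ fQ = p₂ ≫ (a ≫ q₁) := by
              rw [hW₁, Category.assoc]
          _ = (p₂ ≫ a) ≫ q₁ := by rw [Category.assoc]
          _ = (b' ≫ ct) ≫ q₁ := by rw [hbc]
          _ = b' ≫ dt ≫ q₁ := by rw [Category.assoc, ← eq₁]
          _ = (b' ≫ dt) ≫ (k ≫ pullback.snd q₀ fQ) := by rw [hk2]; simp only [Category.assoc]
          _ = ((b' ≫ dt) ≫ k) ≫ pullback.snd q₀ fQ := by simp only [Category.assoc]
    have hre : IsRegEpi ((b' ≫ dt) ≫ k) := key ▸ hp₂.comp hp₁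
    exact IsRegEpi.of_comp (b' ≫ dt) hre
  have hq : IsDoubleExt fE fQ q₁ q₀ :=
    ⟨w, hd.right, hfQre, hre₁, hre₀, hkcomp⟩
  have eqE : (ExtCat.homMk' (hf := hd.left) (hg := hd.right) dt db hd.w) ≫
      ExtCat.homMk' (hf := hd.right) (hg := hq.right) q₁ q₀ hq.w
      = (ExtCat.homMk' (hf := hd.left) (hg := hd.right) ct cb hc.w) ≫
      ExtCat.homMk' q₁ q₀ hq.w := by
    apply ObjectProperty.hom_ext
    apply CommaMorphism.ext
    · exact eq₁
    · exact eq₀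
  refine ⟨Q₁, Q₀, q₁, q₀, fQ, hq, eqE, eq₁, eq₀, ⟨?_⟩, ⟨hco₁⟩, ⟨hco₀⟩⟩
  refine Cofork.IsColimit.mk' _ fun s => ?_
  have hsl : dt ≫ ExtCat.homLeft s.π = ct ≫ ExtCat.homLeft s.π := by
    have h := congrArg ExtCat.homLeft s.condition
    rw [ExtCat.homLeft_comp, ExtCat.homLeft_comp] at h
    exact h
  have hsr : db ≫ ExtCat.homRight s.π = cb ≫ ExtCat.homRight s.π := by
    have h := congrArg ExtCat.homRight s.condition
    rw [ExtCat.homRight_comp, ExtCat.homRight_comp] at h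
    exact h
  obtain ⟨u₁, hu₁⟩ := Cofork.IsColimit.desc' hco₁ (ExtCat.homLeft s.π) hsl
  obtain ⟨u₀, hu₀⟩ := Cofork.IsColimit.desc' hco₀ (ExtCat.homRight s.π) hsr
  rw [Cofork.π_ofπ] at hu₁ hu₀
  have hw2 : u₁ ≫ s.pt.obj.hom = fQ ≫ u₀ := by
    apply (cancel_epi q₁).1
    calc q₁ ≫ u₁ ≫ s.pt.obj.hom = (q₁ ≫ u₁) ≫ s.pt.obj.hom := by rw [Category.assoc]
      _ = (ExtCat.homLeft s.π ≫ s.pt.obj.hom : E₁ ⟶ s.pt.obj.right) :=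
        congrArg (fun x => x ≫ s.pt.obj.hom) hu₁
      _ = fE ≫ ExtCat.homRight s.π := ExtCat.hom_w s.π
      _ = fE ≫ q₀ ≫ u₀ := by rw [hu₀]
      _ = (fE ≫ q₀) ≫ u₀ := by rw [Category.assoc]
      _ = (q₁ ≫ fQ) ≫ u₀ := by rw [w]
      _ = q₁ ≫ fQ ≫ u₀ := by rw [Category.assoc]
  refine ⟨ObjectProperty.homMk (Arrow.homMk (f := Arrow.mk fQ) (g := s.pt.obj) (u := u₁) (v := u₀) hw2), ?_, ?_⟩
  · apply ObjectProperty.hom_ext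
    apply CommaMorphism.ext
    · exact hu₁
    · exact hu₀
  · intro m hm
    have hm' : (ExtCat.homMk' (hf := hd.right) (hg := hq.right) q₁ q₀ hq.w) ≫ m = s.π := by
      simpa using hm
    have h₁ := congrArg ExtCat.homLeft hm'
    rw [ExtCat.homLeft_comp] at h₁
    have h₂ := congrArg ExtCat.homRight hm'
    rw [ExtCat.homRight_comp] at h₂
    apply ObjectProperty.hom_ext
    apply CommaMorphism.ext
    · exact (cancel_epi q₁).1 (h₁.trans hu₁.symm)
    · exact (cancel_epi q₀).1 (h₂.trans hu₀.symm)


end Paper
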